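/- Let $n \geq 1$, let $0 \leq k < n$, and let $\sigma \in S_n$ be a permutation such that $\sigma(\{1,\ldots,k\}) \subseteq \{1,\ldots,k+1\}$. Then there exist unique permutations $\sigma_1, \sigma_2, \tau \in S_n$ with $\sigma = \tau\sigma_1\sigma_2$ such that: (1) $\sigma_1$ restricted to $\{k+1,\ldots,n\}$ is the identity, (2) $\sigma_2$ restricted to $\{1,\ldots,k\}$ is the identity, and (3) $\tau$ is the identity if $\sigma^{-1}(k+1) > k$, and a transposition otherwise. -/

import Mathlib

open Equiv Finset in
theorem pair_decomp (n k : ℕ) (σ : Equiv.Perm (Fin n))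
    (h : ∀ x : Fin n, x.val < k → (σ x).val < k) :
    ∃! q : Equiv.Perm (Fin n) × Equiv.Perm (Fin n),
      σ = q.1 * q.2 ∧ (∀ x : Fin n, k ≤ x.val → q.1 x = x) ∧
      (∀ x : Fin n, x.val < k → q.2 x = x) := by
  have h' : ∀ x : Fin n, x.val < k ↔ (σ x).val < k := by
    set T : Finset (Fin n) := univ.filter (fun x : Fin n => x.val < k) with hT
    have hsub : T.image σ ⊆ T := by
      intro y hy
      simp only [hT, mem_image, mem_filter, mem_univ, true_and] at *
      obtain ⟨x, hx, rfl⟩ := hy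
      exact h x hx
    have heq : T.image σ = T :=
      eq_of_subset_of_card_le hsub (card_image_of_injective _ σ.injective).ge
    intro x
    refine ⟨h x, fun hx => ?_⟩
    have : σ x ∈ T := by simp [hT, hx]
    rw [← heq, mem_image] at this
    obtain ⟨y, hy, hyx⟩ := this
    have := σ.injective hyx
    subst this
    simpa [hT] using hy
  classical
  set σ₁ : Equiv.Perm (Fin n) :=
    Equiv.Perm.ofSubtype (σ.subtypePerm (fun x => (h' x).symm) : Equiv.Perm {x : Fin n // x.val < k}) with hσ₁def
  have hσ₁mem : ∀ x : Fin n, x.val < k → σ₁ x = σ x := fun x hx => by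
    rw [hσ₁def, Equiv.Perm.ofSubtype_apply_of_mem (p := fun a : Fin n => a.val < k) _ hx]; rfl
  have hσ₁not : ∀ x : Fin n, ¬ x.val < k → σ₁ x = x := fun x hx => by
    rw [hσ₁def, Equiv.Perm.ofSubtype_apply_of_not_mem (p := fun a : Fin n => a.val < k) _ hx]
  refine ⟨(σ₁, σ₁⁻¹ * σ), ⟨by simp, fun x hx => hσ₁not x (by omega), fun x hx => ?_⟩, ?_⟩
  · simp only [Equiv.Perm.mul_apply]
    rw [← hσ₁mem x hx]; simp
  · rintro ⟨a, b⟩ ⟨hab, ha, hb⟩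
    have ha1 : a = σ₁ := by
      ext x
      by_cases hx : x.val < k
      · have : σ x = a (b x) := by rw [hab]; rfl
        rw [hb x hx] at this
        rw [← this, hσ₁mem x hx]
      · rw [ha x (by omega), hσ₁not x hx]
    have hb1 : b = σ₁⁻¹ * σ := by rw [hab, ha1]; group
    simp [ha1, hb1]

open Finset in
theorem card_filter_lt_fin (n m : ℕ) (hm : m ≤ n) :
    (Finset.univ.filter (fun x : Fin n => x.val < m)).card = m := by
  have hmap : (Finset.univ : Finset (Fin m)).map (Fin.castLEEmb hm) =
      Finset.univ.filter (fun x : Fin n => x.val < m) := by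
    ext x
    simp only [mem_map, mem_univ, true_and, mem_filter, Fin.castLEEmb]
    constructor
    · rintro ⟨a, rfl⟩; exact a.isLt
    · intro hx; exact ⟨⟨x, hx⟩, rfl⟩
  rw [← hmap, card_map, card_univ, Fintype.card_fin]

open Equiv Finset in
theorem unique_decomposition_permutation (n k : ℕ) (hn : 1 ≤ n) (hk : k < n)
    (σ : Equiv.Perm (Fin n))
    (hσ : ∀ x : Fin n, x.val < k → (σ x).val < k + 1) :
    ∃! p : Equiv.Perm (Fin n) × Equiv.Perm (Fin n) × Equiv.Perm (Fin n),
      σ = p.1 * p.2.1 * p.2.2 ∧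
      (∀ x : Fin n, k ≤ x.val → p.2.1 x = x) ∧
      (∀ x : Fin n, x.val < k → p.2.2 x = x) ∧
      (k ≤ (σ⁻¹ ⟨k, hk⟩).val → p.1 = 1) ∧
      ((σ⁻¹ ⟨k, hk⟩).val < k → p.1.IsSwap) := by
  classical
  set k' : Fin n := ⟨k, hk⟩ with hk'def
  by_cases hc : k ≤ (σ⁻¹ k').val
  · -- case A : σ maps [0,k) into itself
    have h : ∀ x : Fin n, x.val < k → (σ x).val < k := by
      intro x hx
      have h1 := hσ x hx
      have h2 : σ x ≠ k' := by
        intro e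
        have : x = σ⁻¹ k' := by rw [← e]; exact (σ.symm_apply_apply x).symm
        rw [← this] at hc; omega
      have : (σ x).val ≠ k := fun e => h2 (Fin.ext e)
      omega
    obtain ⟨q, ⟨hq1, hq2, hq3⟩, huq⟩ := pair_decomp n k σ h
    refine ⟨(1, q), ⟨by rw [one_mul]; exact hq1, hq2, hq3, fun _ => rfl,
      fun hlt => absurd hlt (by omega)⟩, ?_⟩
    rintro ⟨t, a, b⟩ ⟨hab, h1, h2, h3, _⟩
    have ht : t = 1 := h3 hc
    subst ht
    rw [one_mul] at hab
    have := huq (a, b) ⟨hab, h1, h2⟩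
    rw [Prod.ext_iff] at this
    exact Prod.ext rfl (Prod.ext this.1 this.2)
  · -- case B
    have hj : (σ⁻¹ k').val < k := by omega
    set T : Finset (Fin n) := univ.filter (fun x : Fin n => x.val < k) with hTdef
    set U : Finset (Fin n) := univ.filter (fun x : Fin n => x.val < k + 1) with hUdef
    have hT : T.card = k := card_filter_lt_fin n k hk.le
    have hU : U.card = k + 1 := card_filter_lt_fin n (k + 1) hk
    have himg : T.image σ ⊆ U := by
      intro y hy
      simp only [hTdef, hUdef, mem_image, mem_filter, mem_univ, true_and] at *
      obtain ⟨x, hx, rfl⟩ := hy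
      exact hσ x hx
    have hkmem : k' ∈ T.image σ := by
      simp only [hTdef, mem_image, mem_filter, mem_univ, true_and]
      exact ⟨σ⁻¹ k', hj, σ.apply_symm_apply k'⟩
    have hdcard : (U \ T.image σ).card = 1 := by
      rw [card_sdiff_of_subset himg, card_image_of_injective _ σ.injective, hT, hU]; omega
    obtain ⟨m, hm⟩ := card_eq_one.mp hdcard
    have hmm : m ∈ U \ T.image σ := hm ▸ mem_singleton_self m
    rw [mem_sdiff] at hmm
    have hmU : m.val < k + 1 := by
      have := hmm.1; simp only [hUdef, mem_filter, mem_univ, true_and] at this; exact this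
    have hmnotim : m ∉ T.image σ := hmm.2
    have hmne : m ≠ k' := fun e => hmnotim (e ▸ hkmem)
    have hmk : m.val < k := by
      have : m.val ≠ k := fun e => hmne (Fin.ext e); omega
    have hm_unique : ∀ m' : Fin n, m'.val < k → m' ∉ T.image σ → m' = m := by
      intro m' h1 h2
      have : m' ∈ U \ T.image σ := by
        rw [mem_sdiff]
        exact ⟨by simp only [hUdef, mem_filter, mem_univ, true_and]; omega, h2⟩
      rw [hm, mem_singleton] at this; exact this
    have hnotim : ∀ x : Fin n, x.val < k → σ x ≠ m := by
      intro x hx e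
      exact hmnotim (mem_image.mpr ⟨x, by simp only [hTdef, mem_filter, mem_univ, true_and]; exact hx, e⟩)
    set τ : Equiv.Perm (Fin n) := Equiv.swap m k' with hτdef
    set σ' : Equiv.Perm (Fin n) := τ⁻¹ * σ with hσ'def
    have h' : ∀ x : Fin n, x.val < k → (σ' x).val < k := by
      intro x hx
      simp only [hσ'def, Perm.mul_apply, hτdef, Equiv.swap_inv]
      by_cases he : σ x = k'
      · rw [he, Equiv.swap_apply_right]; exact hmk
      · rw [Equiv.swap_apply_of_ne_of_ne (hnotim x hx) he]
        have h1 := hσ x hx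
        have : (σ x).val ≠ k := fun e => he (Fin.ext e)
        omega
    obtain ⟨q, ⟨hq1, hq2, hq3⟩, huq⟩ := pair_decomp n k σ' h'
    refine ⟨(τ, q), ⟨?_, hq2, hq3, fun hge => absurd hge hc,
      fun _ => ⟨m, k', hmne, rfl⟩⟩, ?_⟩
    · rw [mul_assoc, ← hq1, hσ'def]; group
    · rintro ⟨t, a, b⟩ ⟨hab, h1, h2, _, h4⟩
      dsimp only at hab h1 h2 h4
      obtain ⟨u, v, huv, htuv⟩ := h4 hj
      have ha : ∀ x : Fin n, x.val < k → (a x).val < k := by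
        intro x hx
        by_contra hge
        have h5 : a (a x) = a x := h1 (a x) (not_lt.mp hge)
        have h6 := a.injective h5
        rw [h6] at hge
        exact hge hx
      have hσev : ∀ x : Fin n, x.val < k → σ x = t (a x) := by
        intro x hx
        rw [hab]
        simp only [Perm.mul_apply, h2 x hx]
      set w : Fin n := a (σ⁻¹ k') with hwdef
      have hw : w.val < k := ha _ hj
      have hwne : w ≠ k' := fun e => by rw [e] at hw; simp [hk'def] at hw
      have htw : t w = k' := by
        have := hσev (σ⁻¹ k') hj
        rw [show σ (σ⁻¹ k') = k' from σ.apply_symm_apply k'] at this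
        exact this.symm
      -- t = swap w k'
      have ht2 : t = Equiv.swap w k' := by
        have hwmem : w = u ∨ w = v := by
          by_contra hcon
          push_neg at hcon
          rw [htuv, Equiv.swap_apply_of_ne_of_ne hcon.1 hcon.2] at htw
          exact hwne htw
        rcases hwmem with rfl | rfl
        · have : t w = v := by rw [htuv, Equiv.swap_apply_left]
          rw [this] at htw; rw [htuv, htw]
        · have : t w = u := by rw [htuv, Equiv.swap_apply_right]
          rw [this] at htw; rw [htuv, htw, Equiv.swap_comm]
      have hwnot : w ∉ T.image σ := by
        intro hmem
        rw [mem_image] at hmem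
        obtain ⟨x, hxT, hxe⟩ := hmem
        simp only [hTdef, mem_filter, mem_univ, true_and] at hxT
        have hax := ha x hxT
        have h5 : σ x = t (a x) := hσev x hxT
        by_cases he : a x = w
        · rw [he, htw] at h5
          exact hwne (hxe.symm.trans h5)
        · have hane : a x ≠ k' := fun e => by rw [e] at hax; simp [hk'def] at hax
          rw [ht2, Equiv.swap_apply_of_ne_of_ne he hane] at h5
          rw [h5] at hxe
          exact he hxe
      have hwm : w = m := hm_unique w hw hwnot
      have ht3 : t = τ := by rw [ht2, hwm, hτdef]
      have hab' : σ' = a * b := by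
        rw [hσ'def, hab, ht3]; group
      have := huq (a, b) ⟨hab', h1, h2⟩
      rw [Prod.ext_iff] at this
      exact Prod.ext ht3 (Prod.ext this.1 this.2)
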